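/- Suppose h, f, g : ℝ → ℝ are continuous; h satisfies |h(x)-h(y)| ≥ K|x-y| (K>1) and sup|h(x) - κ_h x| < ∞; f satisfies |f(x)-f(y)| ≥ α|x-y| (α>0) and sup|f(x) - κ_f x| < ∞; g is Lipschitz with constant ≤ β, κ_g ≠ 0, and sup|g(x) - κ_g x| < ∞. If β ≤ (1/4)α²K² when α < 2(1-1/K), or β < (K-1)(αK-K+1) when α ≥ 2(1-1/K), then the equation φ(φ(x)) = h(φ(f(x))) + g(x) has a continuous solution φ : ℝ → ℝ; moreover, this solution is unbounded. -/

import Mathlib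

lemma aux_slope {c d e : ℝ} (hd : ∀ t : ℝ, 0 ≤ t → c * t ≤ d * t + e) : c ≤ d := by
  by_contra hcd
  push_neg at hcd
  have he : 0 ≤ e := by have := hd 0 le_rfl; simpa using this
  have hpos : 0 < c - d := by linarith
  have ht : 0 ≤ (e + 1) / (c - d) := by positivity
  have h1 := hd ((e + 1) / (c - d)) ht
  have h2 : (c - d) * ((e + 1) / (c - d)) = e + 1 := by field_simp
  nlinarith

lemma aux_exp_ge {F : ℝ → ℝ} {c κ C : ℝ} (hexp : ∀ x y, c * |x - y| ≤ |F x - F y|)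
    (hb : ∀ x, |F x - κ * x| ≤ C) : c ≤ |κ| := by
  apply aux_slope (e := 2 * C)
  intro t ht
  have h1 := hexp t 0
  have h2 := hb t
  have h3 := hb 0
  have h4 : |F t - F 0| ≤ |F t - κ * t| + |κ * t - F 0| := abs_sub_le _ _ _
  have h5 : |κ * t - F 0| ≤ |κ * t - κ * 0| + |κ * 0 - F 0| := abs_sub_le _ _ _
  have h6 : |κ * t - κ * 0| = |κ| * t := by
    rw [show κ * t - κ * 0 = κ * t by ring, abs_mul, abs_of_nonneg ht]
  have h7 : |κ * 0 - F 0| = |F 0 - κ * 0| := abs_sub_comm _ _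
  have h8 : |t - 0| = t := by rw [sub_zero, abs_of_nonneg ht]
  rw [h8] at h1
  linarith

lemma aux_lip_ge {G : ℝ → ℝ} {β κ C : ℝ} (hlip : ∀ x y, |G x - G y| ≤ β * |x - y|)
    (hb : ∀ x, |G x - κ * x| ≤ C) : |κ| ≤ β := by
  apply aux_slope (e := 2 * C)
  intro t ht
  have h1 := hlip t 0
  have h2 := hb t
  have h3 := hb 0
  have h4 : |κ * t - κ * 0| ≤ |κ * t - G t| + |G t - κ * 0| := abs_sub_le _ _ _
  have h5 : |G t - κ * 0| ≤ |G t - G 0| + |G 0 - κ * 0| := abs_sub_le _ _ _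
  have h6 : |κ * t - κ * 0| = |κ| * t := by
    rw [show κ * t - κ * 0 = κ * t by ring, abs_mul, abs_of_nonneg ht]
  have h7 : |κ * t - G t| = |G t - κ * t| := abs_sub_comm _ _
  have h8 : |t - 0| = t := by rw [sub_zero, abs_of_nonneg ht]
  rw [h8] at h1
  linarith

lemma aux_inv {F : ℝ → ℝ} {c κ C : ℝ} (hc : 0 < c) (hcont : Continuous F)
    (hexp : ∀ x y, c * |x - y| ≤ |F x - F y|) (hb : ∀ x, |F x - κ * x| ≤ C) (hκ : κ ≠ 0) :
    ∃ G : ℝ → ℝ, (∀ y, F (G y) = y) ∧ (∀ x, G (F x) = x) ∧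
      (∀ x y, c * |G x - G y| ≤ |x - y|) ∧ (∀ y, |κ * G y - y| ≤ C) := by
  have hsurj : ∀ y, ∃ x, F x = y := by
    intro y
    have h1 : F (y / κ - C / κ) ≤ y := by
      have hb1 := (abs_le.mp (hb (y / κ - C / κ))).2
      rw [show κ * (y / κ - C / κ) = y - C from by field_simp] at hb1
      linarith
    have h2 : y ≤ F (y / κ + C / κ) := by
      have hb1 := (abs_le.mp (hb (y / κ + C / κ))).1
      rw [show κ * (y / κ + C / κ) = y + C from by field_simp] at hb1
      linarith
    exact intermediate_value_univ (y / κ - C / κ) (y / κ + C / κ) hcont (Set.mem_Icc.mpr ⟨h1, h2⟩)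
  set G : ℝ → ℝ := fun y => Classical.choose (hsurj y) with hG
  have hFG : ∀ y, F (G y) = y := fun y => Classical.choose_spec (hsurj y)
  have hinj : ∀ x y, F x = F y → x = y := by
    intro x y hxy
    have h1 := hexp x y
    rw [hxy, sub_self, abs_zero] at h1
    have h0 : |x - y| ≤ 0 := by nlinarith [abs_nonneg (x - y)]
    exact sub_eq_zero.mp (abs_eq_zero.mp (le_antisymm h0 (abs_nonneg _)))
  refine ⟨G, hFG, fun x => hinj _ _ (hFG (F x)), fun x y => ?_, fun y => ?_⟩
  · have := hexp (G x) (G y)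
    rwa [hFG, hFG] at this
  · have := hb (G y)
    rw [hFG] at this
    rwa [abs_sub_comm] at this

set_option maxHeartbeats 2000000 in
theorem stmt_16 (h f g : ℝ → ℝ) (hh : Continuous h) (hf : Continuous f) (hg : Continuous g)
    (K : ℝ) (hK : 1 < K) (hexp : ∀ x y : ℝ, K * |x - y| ≤ |h x - h y|)
    (κh : ℝ) (hκh : ∃ C : ℝ, ∀ x : ℝ, |h x - κh * x| ≤ C)
    (α : ℝ) (hα : 0 < α) (hfexp : ∀ x y : ℝ, α * |x - y| ≤ |f x - f y|)
    (κf : ℝ) (hκf : ∃ C : ℝ, ∀ x : ℝ, |f x - κf * x| ≤ C)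
    (β : ℝ) (hβ : 0 ≤ β) (hglip : ∀ x y : ℝ, |g x - g y| ≤ β * |x - y|)
    (κg : ℝ) (hκg0 : κg ≠ 0) (hκg : ∃ C : ℝ, ∀ x : ℝ, |g x - κg * x| ≤ C)
    (hcond1 : α < 2 * (1 - 1 / K) → β ≤ (1 / 4) * α ^ 2 * K ^ 2)
    (hcond2 : 2 * (1 - 1 / K) ≤ α → β < (K - 1) * (α * K - K + 1)) :
    ∃ φ : ℝ → ℝ, Continuous φ ∧ (∀ x : ℝ, φ (φ x) = h (φ (f x)) + g x) ∧
      ¬ ∃ M : ℝ, ∀ x : ℝ, |φ x| ≤ M := by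
  classical
  obtain ⟨Ch, hCh⟩ := hκh
  obtain ⟨Cf, hCf⟩ := hκf
  obtain ⟨Cg, hCg⟩ := hκg
  have hCh0 : 0 ≤ Ch := le_trans (abs_nonneg _) (hCh 0)
  have hCf0 : 0 ≤ Cf := le_trans (abs_nonneg _) (hCf 0)
  have hCg0 : 0 ≤ Cg := le_trans (abs_nonneg _) (hCg 0)
  have hK0 : (0:ℝ) < K := by linarith
  have hKne : K ≠ 0 := ne_of_gt hK0
  have hαne : α ≠ 0 := ne_of_gt hα
  have hKκh : K ≤ |κh| := aux_exp_ge hexp hCh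
  have hακf : α ≤ |κf| := aux_exp_ge hfexp hCf
  have hκgβ : |κg| ≤ β := aux_lip_ge hglip hCg
  have hκh0 : κh ≠ 0 := by
    intro h0; rw [h0, abs_zero] at hKκh; linarith
  have hκf0 : κf ≠ 0 := by
    intro h0; rw [h0, abs_zero] at hακf; linarith
  obtain ⟨H, hHF, hHfF, hHlip, hHb⟩ := aux_inv hK0 hh hexp hCh hκh0
  obtain ⟨Fi, hFiF, hFif, hFilip, hFib⟩ := aux_inv hα hf hfexp hCf hκf0
  have hHcont : Continuous H := by
    have hl : LipschitzWith (Real.toNNReal (1/K)) H := by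
      apply LipschitzWith.of_dist_le_mul
      intro x y
      rw [Real.coe_toNNReal _ (le_of_lt (one_div_pos.mpr hK0)), Real.dist_eq, Real.dist_eq]
      have h1 := hHlip x y
      rw [div_mul_eq_mul_div, le_div_iff₀ hK0]
      linarith
    exact hl.continuous
  have hFicont : Continuous Fi := by
    have hl : LipschitzWith (Real.toNNReal (1/α)) Fi := by
      apply LipschitzWith.of_dist_le_mul
      intro x y
      rw [Real.coe_toNNReal _ (le_of_lt (one_div_pos.mpr hα)), Real.dist_eq, Real.dist_eq]
      have h1 := hFilip x y
      rw [div_mul_eq_mul_div, le_div_iff₀ hα]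
      linarith
    exact hl.continuous
  -- discriminant and L
  have hdisc : 0 ≤ K^2*α^2 - 4*β := by
    rcases lt_or_ge α (2*(1-1/K)) with hcase | hcase
    · have := hcond1 hcase; linarith
    · have := hcond2 hcase; linarith [sq_nonneg (K*α - 2*(K-1))]
  obtain ⟨s0, hs0def⟩ : ∃ t : ℝ, t = Real.sqrt (K^2*α^2 - 4*β) := ⟨_, rfl⟩
  have hs0sq : s0^2 = K^2*α^2 - 4*β := by rw [hs0def]; exact Real.sq_sqrt hdisc
  have hs00 : 0 ≤ s0 := by rw [hs0def]; exact Real.sqrt_nonneg _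
  have hs0le : s0 ≤ K*α := by
    by_contra hcon
    push_neg at hcon
    have hp : 0 < s0 + K*α := by linarith [hs00, mul_pos hK0 hα]
    linarith [hs0sq, hβ, mul_pos (sub_pos.mpr hcon) hp]
  obtain ⟨L, hLdef⟩ : ∃ t : ℝ, t = (K*α - s0)/2 := ⟨_, rfl⟩
  have hL0 : 0 ≤ L := by rw [hLdef]; linarith
  have hLquad : L^2 + β = K*α*L := by rw [hLdef]; linear_combination hs0sq/4
  have hLK : L < K - 1 := by
    rcases lt_or_ge α (2*(1-1/K)) with hcase | hcase
    · have h1 : K*α < K*(2*(1-1/K)) := mul_lt_mul_of_pos_left hcase hK0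
      have h2 : K*(2*(1-1/K)) = 2*(K-1) := by field_simp
      rw [hLdef]; linarith
    · have hβ2 := hcond2 hcase
      by_contra hcon
      push_neg at hcon
      rw [hLdef] at hcon
      have hf1 : (0:ℝ) ≤ K*α - 2*(K-1) - s0 := by linarith
      have hf2 : (0:ℝ) ≤ K*α - 2*(K-1) + s0 := by linarith
      linarith [hs0sq, mul_nonneg hf1 hf2]
  -- the slope lam
  obtain ⟨a, hadef⟩ : ∃ t : ℝ, t = κh * κf := ⟨_, rfl⟩
  have haK : K*α ≤ |a| := by
    rw [hadef, abs_mul]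
    exact mul_le_mul hKκh hακf (le_of_lt hα) (abs_nonneg _)
  have hKα0 : 0 < K*α := by positivity
  have ha0 : 0 < |a| := lt_of_lt_of_le hKα0 haK
  obtain ⟨σ, hσ1, hσa⟩ : ∃ σ : ℝ, (σ = 1 ∨ σ = -1) ∧ σ * a = |a| := by
    rcases le_or_gt 0 a with h0 | h0
    · exact ⟨1, Or.inl rfl, by rw [one_mul, abs_of_nonneg h0]⟩
    · exact ⟨-1, Or.inr rfl, by rw [abs_of_neg h0]; ring⟩
  have hσsq : σ^2 = 1 := by rcases hσ1 with h1|h1 <;> rw [h1] <;> norm_num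
  have hσabs : |σ| = 1 := by rcases hσ1 with h1|h1 <;> rw [h1] <;> norm_num
  have hsqa : |a|^2 = a^2 := sq_abs a
  have hKα2 : K^2*α^2 ≤ a^2 := by linarith [hsqa, mul_self_le_mul_self hKα0.le haK]
  have hdisc2 : 0 ≤ a^2 + 4*κg := by
    have h2 : -κg ≤ |κg| := neg_le_abs _
    linarith [hKα2, hdisc, hκgβ, h2]
  obtain ⟨s1, hs1def⟩ : ∃ t : ℝ, t = Real.sqrt (a^2 + 4*κg) := ⟨_, rfl⟩
  have hs1sq : s1^2 = a^2 + 4*κg := by rw [hs1def]; exact Real.sq_sqrt hdisc2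
  have hs10 : 0 ≤ s1 := by rw [hs1def]; exact Real.sqrt_nonneg _
  obtain ⟨lam, hlamdef⟩ : ∃ t : ℝ, t = (a - σ * s1)/2 := ⟨_, rfl⟩
  have hlam_eq : lam^2 = a * lam + κg := by
    rw [hlamdef]; linear_combination (s1^2/4)*hσsq + hs1sq/4
  have hs01 : s0 ≤ s1 := by
    rw [hs0def, hs1def]
    apply Real.sqrt_le_sqrt
    have h2 : -β ≤ κg := by have := neg_abs_le κg; linarith
    linarith
  have hlamabs : |lam| * (|a| + s1) = 2*|κg| := by
    have e0 : σ * (a - σ * s1) = |a| - s1 := by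
      have : σ * (σ * s1) = σ^2 * s1 := by ring
      rw [mul_sub, hσa, this, hσsq, one_mul]
    have e1 : |lam| = |(|a| - s1)|/2 := by
      rw [hlamdef, abs_div, show |(2:ℝ)| = 2 by norm_num]
      congr 1
      calc |a - σ*s1| = |σ| * |a - σ*s1| := by rw [hσabs, one_mul]
        _ = |σ * (a - σ*s1)| := (abs_mul _ _).symm
        _ = |(|a| - s1)| := by rw [e0]
    have e2 : |(|a| - s1)| * (|a| + s1) = |(|a| - s1) * (|a| + s1)| := by
      rw [abs_mul (|a| - s1) (|a| + s1), abs_of_nonneg (add_nonneg (abs_nonneg a) hs10)]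
    have e3 : (|a| - s1) * (|a| + s1) = -(4*κg) := by linear_combination hsqa - hs1sq
    rw [e1, div_mul_eq_mul_div, e2, e3, abs_neg,
      show |4*κg| = 4*|κg| from by rw [abs_mul]; norm_num]
    ring
  have hlamne : lam ≠ 0 := by
    intro h0
    rw [h0, abs_zero, zero_mul] at hlamabs
    have := abs_pos.mpr hκg0
    linarith
  have hlamL : |lam| ≤ L := by
    have hLs : L * (K*α + s0) = 2*β := by rw [hLdef]; linear_combination (-1/2)*hs0sq
    have h1 : |lam| * (|a| + s1) ≤ L * (|a| + s1) := by
      calc |lam| * (|a| + s1) = 2*|κg| := hlamabs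
        _ ≤ 2*β := by linarith
        _ = L * (K*α + s0) := hLs.symm
        _ ≤ L * (|a| + s1) := mul_le_mul_of_nonneg_left (by linarith) hL0
    exact le_of_mul_le_mul_right h1 (by linarith)
  -- constants
  obtain ⟨c, hcdef⟩ : ∃ t : ℝ, t = (1 + L)/K := ⟨_, rfl⟩
  have hc0 : 0 ≤ c := by rw [hcdef]; exact div_nonneg (by linarith) hK0.le
  have hc1 : c < 1 := by rw [hcdef, div_lt_one hK0]; linarith
  obtain ⟨R0, hR0def⟩ : ∃ t : ℝ, t = Ch/K + L*Cf + Cg/K := ⟨_, rfl⟩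
  have hR00 : 0 ≤ R0 := by
    rw [hR0def]
    have h1 : 0 ≤ Ch/K := div_nonneg hCh0 hK0.le
    have h2 : 0 ≤ L*Cf := mul_nonneg hL0 hCf0
    have h3 : 0 ≤ Cg/K := div_nonneg hCg0 hK0.le
    linarith
  obtain ⟨M, hMdef⟩ : ∃ t : ℝ, t = R0/(1-c) := ⟨_, rfl⟩
  have hM0 : 0 ≤ M := by rw [hMdef]; exact div_nonneg hR00 (by linarith)
  have hMeq : c*M + R0 = M := by
    have h1c : (1:ℝ) - c ≠ 0 := by intro h0; rw [sub_eq_zero] at h0; exact absurd h0.symm (ne_of_lt hc1)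
    have h2 : R0/(1-c) * (1-c) = R0 := div_mul_cancel₀ _ h1c
    rw [hMdef]
    linear_combination (-1 : ℝ) * h2
  -- refined inverse bounds
  have hHb2 : ∀ z, |H z - z/κh| ≤ Ch/K := by
    intro z
    have h1 := hHb z
    have h2 : |κh| * |H z - z/κh| = |κh * H z - z| := by
      rw [← abs_mul, mul_sub, mul_div_cancel₀ _ hκh0]
    have h3 : K * |H z - z/κh| ≤ |κh| * |H z - z/κh| :=
      mul_le_mul_of_nonneg_right hKκh (abs_nonneg _)
    rw [h2] at h3
    rw [le_div_iff₀ hK0]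
    linarith
  have hFilip2 : ∀ x y, |Fi x - Fi y| ≤ |x - y|/α := by
    intro x y
    have h1 := hFilip x y
    rw [le_div_iff₀ hα]
    linarith
  -- key bound
  have key_bound : ∀ u : ℝ → ℝ, (∀ t, |u t| ≤ M) → ∀ x,
      |H ((lam * (lam * Fi x + u (Fi x)) + u (lam * Fi x + u (Fi x))) - g (Fi x)) - lam * x| ≤ M := by
    intro u hu x
    set w := Fi x with hw
    set p := lam * w + u w with hp
    set z := lam * p + u p - g w with hz
    set E := lam * u w + u p - (g w - κg * w) with hE
    have hzE : z = a*lam*w + E := by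
      rw [hz, hp, hE]
      linear_combination w * hlam_eq
    have hzdec : z/κh - lam*x = lam*(κf*w - x) + E/κh := by
      rw [hzE, hadef]
      field_simp
      ring
    have h1 : |H z - z/κh| ≤ Ch/K := hHb2 z
    have hEb : |E| ≤ L*M + M + Cg := by
      have e1 : |E| ≤ |lam * u w + u p| + |g w - κg * w| := by
        rw [hE]; exact abs_sub _ _
      have e2 : |lam * u w + u p| ≤ |lam| * |u w| + |u p| := by
        calc |lam * u w + u p| ≤ |lam * u w| + |u p| := abs_add_le _ _
          _ = |lam| * |u w| + |u p| := by rw [abs_mul]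
      have e3 : |lam| * |u w| ≤ L * M := mul_le_mul hlamL (hu w) (abs_nonneg _) hL0
      have e4 := hu p
      have e5 := hCg w
      linarith
    have h2 : |z/κh - lam*x| ≤ L*Cf + (L*M + M + Cg)/K := by
      rw [hzdec]
      have h3 : |lam*(κf*w - x)| ≤ L*Cf := by
        rw [abs_mul]
        exact mul_le_mul hlamL (hFib x) (abs_nonneg _) hL0
      have h4 : |E/κh| ≤ (L*M+M+Cg)/K := by
        rw [abs_div]
        exact div_le_div₀ (add_nonneg (add_nonneg (mul_nonneg hL0 hM0) hM0) hCg0) hEb hK0 hKκh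
      calc |lam*(κf*w - x) + E/κh| ≤ |lam*(κf*w - x)| + |E/κh| := abs_add_le _ _
        _ ≤ L*Cf + (L*M+M+Cg)/K := by linarith
    have hfin : Ch/K + (L*Cf + (L*M+M+Cg)/K) = c*M + R0 := by
      rw [hcdef, hR0def]
      field_simp
      ring
    calc |H z - lam*x| ≤ |H z - z/κh| + |z/κh - lam*x| := abs_sub_le _ _ _
      _ ≤ Ch/K + (L*Cf + (L*M+M+Cg)/K) := by linarith
      _ = c*M + R0 := hfin
      _ = M := hMeq
  -- key lipschitz
  have key_lip : ∀ u : ℝ → ℝ, (∀ s t, |(lam*s + u s) - (lam*t + u t)| ≤ L * |s - t|) → ∀ x y,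
      |H ((lam * (lam * Fi x + u (Fi x)) + u (lam * Fi x + u (Fi x))) - g (Fi x))
        - H ((lam * (lam * Fi y + u (Fi y)) + u (lam * Fi y + u (Fi y))) - g (Fi y))| ≤ L * |x - y| := by
    intro u hu x y
    set wx := Fi x with hwx
    set wy := Fi y with hwy
    set px := lam * wx + u wx with hpx
    set py := lam * wy + u wy with hpy
    set zx := lam * px + u px - g wx with hzx
    set zy := lam * py + u py - g wy with hzy
    have h0 : K * |H zx - H zy| ≤ |zx - zy| := hHlip zx zy
    have h1 : |zx - zy| ≤ |(lam*px + u px) - (lam*py + u py)| + |g wx - g wy| := by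
      have e : zx - zy = ((lam*px + u px) - (lam*py + u py)) - (g wx - g wy) := by
        rw [hzx, hzy]; ring
      rw [e]; exact abs_sub _ _
    have h2 : |(lam*px + u px) - (lam*py + u py)| ≤ L * |px - py| := hu px py
    have h3 : |px - py| ≤ L * |wx - wy| := hu wx wy
    have h4 : |g wx - g wy| ≤ β * |wx - wy| := hglip wx wy
    have h5 : |wx - wy| ≤ |x - y|/α := hFilip2 x y
    have h6 : |zx - zy| ≤ (L^2 + β) * |wx - wy| := by
      have h6a : L*|px - py| ≤ L*(L*|wx - wy|) := mul_le_mul_of_nonneg_left h3 hL0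
      linarith [h1, h2, h4, h6a]
    have h7 : (L^2+β) * |wx - wy| ≤ (L^2+β) * (|x-y|/α) := by
      exact mul_le_mul_of_nonneg_left h5 (add_nonneg (sq_nonneg L) hβ)
    have h8 : (L^2+β)*(|x-y|/α) = K*(L*|x-y|) := by
      rw [hLquad]; field_simp
    have h9 := h0.trans (h6.trans h7)
    rw [h8] at h9
    exact le_of_mul_le_mul_left h9 hK0
  -- key contraction
  have key_contr : ∀ (u v : ℝ → ℝ) (D : ℝ),
      (∀ s t, |(lam*s + u s) - (lam*t + u t)| ≤ L * |s - t|) →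
      (∀ t, |u t - v t| ≤ D) → ∀ x,
      |H ((lam * (lam * Fi x + u (Fi x)) + u (lam * Fi x + u (Fi x))) - g (Fi x))
        - H ((lam * (lam * Fi x + v (Fi x)) + v (lam * Fi x + v (Fi x))) - g (Fi x))| ≤ c * D := by
    intro u v D hu huv x
    set w := Fi x with hw
    set pu := lam * w + u w with hpu
    set pv := lam * w + v w with hpv
    set zu := lam * pu + u pu - g w with hzu
    set zv := lam * pv + v pv - g w with hzv
    have hD0 : 0 ≤ D := le_trans (abs_nonneg _) (huv 0)
    have h0 : K * |H zu - H zv| ≤ |zu - zv| := hHlip zu zv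
    have h1 : |zu - zv| ≤ |(lam*pu + u pu) - (lam*pv + u pv)| + |u pv - v pv| := by
      have e : zu - zv = ((lam*pu + u pu) - (lam*pv + u pv)) + (u pv - v pv) := by
        rw [hzu, hzv]; ring
      rw [e]; exact abs_add_le _ _
    have h2 : |(lam*pu + u pu) - (lam*pv + u pv)| ≤ L * |pu - pv| := hu pu pv
    have h3 : |pu - pv| = |u w - v w| := by rw [hpu, hpv]; congr 1; ring
    have h4 : |u w - v w| ≤ D := huv w
    have h5 : |u pv - v pv| ≤ D := huv pv
    have h6 : |zu - zv| ≤ L*D + D := by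
      have h6a : L*|pu - pv| ≤ L*D := by rw [h3]; exact mul_le_mul_of_nonneg_left h4 hL0
      linarith [h1, h2, h5, h6a]
    have h7 : K*(c*D) = L*D + D := by rw [hcdef]; field_simp; ring
    have h8 : K * |H zu - H zv| ≤ K*(c*D) := by linarith
    exact le_of_mul_le_mul_left h8 hK0
  -- the space
  set S : Set (BoundedContinuousFunction ℝ ℝ) :=
    {u | ‖u‖ ≤ M ∧ ∀ s t : ℝ, |(lam*s + u s) - (lam*t + u t)| ≤ L * |s - t|} with hSdef
  have hSclosed : IsClosed S := by
    have h1 : S = {u : BoundedContinuousFunction ℝ ℝ | ‖u‖ ≤ M} ∩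
        ⋂ (s : ℝ), ⋂ (t : ℝ),
          {u : BoundedContinuousFunction ℝ ℝ | |(lam*s + u s) - (lam*t + u t)| ≤ L * |s - t|} := by
      ext u
      simp only [hSdef, Set.mem_setOf_eq, Set.mem_inter_iff, Set.mem_iInter]
    rw [h1]
    refine IsClosed.inter (isClosed_le continuous_norm continuous_const) ?_
    refine isClosed_iInter fun s => isClosed_iInter fun t => ?_
    refine isClosed_le ?_ continuous_const
    have he1 : Continuous fun u : BoundedContinuousFunction ℝ ℝ => u s :=
      continuous_eval_const s
    have he2 : Continuous fun u : BoundedContinuousFunction ℝ ℝ => u t :=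
      continuous_eval_const t
    exact (((continuous_const.add he1).sub (continuous_const.add he2)).abs)
  have hzero_mem : (0 : BoundedContinuousFunction ℝ ℝ) ∈ S := by
    constructor
    · rw [norm_zero]; exact hM0
    · intro s t
      simp only [BoundedContinuousFunction.coe_zero, Pi.zero_apply, add_zero]
      rw [← mul_sub, abs_mul]
      exact mul_le_mul_of_nonneg_right hlamL (abs_nonneg _)
  haveI : Nonempty S := ⟨⟨0, hzero_mem⟩⟩
  haveI : CompleteSpace S := hSclosed.completeSpace_coe
  have humem : ∀ u : S, ∀ t : ℝ, |(u : BoundedContinuousFunction ℝ ℝ) t| ≤ M := by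
    intro u t
    have h1 := BoundedContinuousFunction.norm_coe_le_norm (u : BoundedContinuousFunction ℝ ℝ) t
    rw [Real.norm_eq_abs] at h1
    exact h1.trans u.2.1
  have Tcont : ∀ u : BoundedContinuousFunction ℝ ℝ, Continuous (fun x =>
      H ((lam * (lam * Fi x + u (Fi x)) + u (lam * Fi x + u (Fi x))) - g (Fi x)) - lam * x) := by
    intro u
    apply Continuous.sub _ (continuous_const.mul continuous_id)
    apply hHcont.comp
    apply Continuous.sub _ (hg.comp hFicont)
    apply Continuous.add
    · exact continuous_const.mul
        ((continuous_const.mul hFicont).add (u.continuous.comp hFicont))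
    · exact u.continuous.comp
        ((continuous_const.mul hFicont).add (u.continuous.comp hFicont))
  have hbound : ∀ u : S, ∀ x : ℝ,
      ‖H ((lam * (lam * Fi x + (u : BoundedContinuousFunction ℝ ℝ) (Fi x))
          + (u : BoundedContinuousFunction ℝ ℝ) (lam * Fi x + (u : BoundedContinuousFunction ℝ ℝ) (Fi x)))
          - g (Fi x)) - lam * x‖ ≤ M := by
    intro u x
    rw [Real.norm_eq_abs]
    exact key_bound _ (humem u) x
  set TT : S → BoundedContinuousFunction ℝ ℝ := fun u =>
    BoundedContinuousFunction.ofNormedAddCommGroup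
      (fun x => H ((lam * (lam * Fi x + (u : BoundedContinuousFunction ℝ ℝ) (Fi x))
          + (u : BoundedContinuousFunction ℝ ℝ) (lam * Fi x + (u : BoundedContinuousFunction ℝ ℝ) (Fi x)))
          - g (Fi x)) - lam * x)
      (Tcont u) M (hbound u) with hTTdef
  have hTTcoe : ∀ (u : S) (x : ℝ), TT u x =
      H ((lam * (lam * Fi x + (u : BoundedContinuousFunction ℝ ℝ) (Fi x))
          + (u : BoundedContinuousFunction ℝ ℝ) (lam * Fi x + (u : BoundedContinuousFunction ℝ ℝ) (Fi x)))
          - g (Fi x)) - lam * x := by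
    intro u x
    rfl
  have hTmem : ∀ u : S, TT u ∈ S := by
    intro u
    constructor
    · exact BoundedContinuousFunction.norm_ofNormedAddCommGroup_le (Tcont u) hM0 (hbound u)
    · intro s t
      have e : (lam*s + TT u s) - (lam*t + TT u t) =
          H ((lam * (lam * Fi s + (u : BoundedContinuousFunction ℝ ℝ) (Fi s))
            + (u : BoundedContinuousFunction ℝ ℝ) (lam * Fi s + (u : BoundedContinuousFunction ℝ ℝ) (Fi s)))
            - g (Fi s))
          - H ((lam * (lam * Fi t + (u : BoundedContinuousFunction ℝ ℝ) (Fi t))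
            + (u : BoundedContinuousFunction ℝ ℝ) (lam * Fi t + (u : BoundedContinuousFunction ℝ ℝ) (Fi t)))
            - g (Fi t)) := by
        rw [hTTcoe, hTTcoe]; ring
      rw [e]
      exact key_lip _ u.2.2 s t
  set Tmap : S → S := fun u => ⟨TT u, hTmem u⟩ with hTmapdef
  have hcontr : ContractingWith (Real.toNNReal c) Tmap := by
    constructor
    · have h1 : ((Real.toNNReal c : NNReal) : ℝ) < 1 := by
        rw [Real.coe_toNNReal c hc0]; exact hc1
      exact_mod_cast h1
    · apply LipschitzWith.of_dist_le_mul
      intro u v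
      have hdd : dist (Tmap u) (Tmap v) = dist (TT u) (TT v) := Subtype.dist_eq _ _
      have hdd2 : dist u v = dist (u : BoundedContinuousFunction ℝ ℝ) (v : BoundedContinuousFunction ℝ ℝ) :=
        Subtype.dist_eq _ _
      rw [hdd, hdd2, Real.coe_toNNReal c hc0]
      rw [BoundedContinuousFunction.dist_le (mul_nonneg hc0 dist_nonneg)]
      intro x
      rw [Real.dist_eq]
      have e : TT u x - TT v x =
          H ((lam * (lam * Fi x + (u : BoundedContinuousFunction ℝ ℝ) (Fi x))
            + (u : BoundedContinuousFunction ℝ ℝ) (lam * Fi x + (u : BoundedContinuousFunction ℝ ℝ) (Fi x)))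
            - g (Fi x))
          - H ((lam * (lam * Fi x + (v : BoundedContinuousFunction ℝ ℝ) (Fi x))
            + (v : BoundedContinuousFunction ℝ ℝ) (lam * Fi x + (v : BoundedContinuousFunction ℝ ℝ) (Fi x)))
            - g (Fi x)) := by
        rw [hTTcoe, hTTcoe]; ring
      rw [e]
      refine key_contr _ _ _ u.2.2 (fun t => ?_) x
      have h1 := BoundedContinuousFunction.dist_coe_le_dist
        (f := (u : BoundedContinuousFunction ℝ ℝ)) (g := (v : BoundedContinuousFunction ℝ ℝ)) t
      rw [Real.dist_eq] at h1
      exact h1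
  set ufix : S := ContractingWith.fixedPoint Tmap hcontr with hufixdef
  have hfix : Tmap ufix = ufix := hcontr.fixedPoint_isFixedPt
  set u0 : BoundedContinuousFunction ℝ ℝ := (ufix : BoundedContinuousFunction ℝ ℝ) with hu0def
  have hfixfun : ∀ x, H ((lam * (lam * Fi x + u0 (Fi x)) + u0 (lam * Fi x + u0 (Fi x))) - g (Fi x))
      - lam * x = u0 x := by
    intro x
    have h2 : ((Tmap ufix : S) : BoundedContinuousFunction ℝ ℝ) = u0 := by rw [hfix]
    have h3 : TT ufix x = u0 x := by rw [← h2]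
    exact h3
  refine ⟨fun x => lam * x + u0 x, ?_, ?_, ?_⟩
  · exact (continuous_const.mul continuous_id).add u0.continuous
  · intro t
    have h1 := hfixfun (f t)
    rw [hFif t] at h1
    have h2 : H ((lam*(lam*t + u0 t) + u0 (lam*t + u0 t)) - g t) = lam * f t + u0 (f t) := by
      linarith
    have h3 := congrArg h h2
    rw [hHF] at h3
    show lam * (lam*t + u0 t) + u0 (lam*t + u0 t) = h (lam * f t + u0 (f t)) + g t
    linarith
  · rintro ⟨M', hM'⟩
    have hlpos : 0 < |lam| := abs_pos.mpr hlamne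
    set x0 := (M' + M + 1)/|lam| with hx0def
    have hM'0 : 0 ≤ M' := le_trans (abs_nonneg _) (hM' 0)
    have hx00 : 0 ≤ x0 := div_nonneg (by linarith) (abs_nonneg _)
    have h1 : |lam * x0| = M' + M + 1 := by
      rw [abs_mul, abs_of_nonneg hx00, hx0def, mul_div_cancel₀ _ (ne_of_gt hlpos)]
    have h2 : |lam * x0| ≤ |lam * x0 + u0 x0| + |u0 x0| := by
      calc |lam*x0| = |(lam*x0 + u0 x0) - u0 x0| := by congr 1; ring
        _ ≤ |lam*x0 + u0 x0| + |u0 x0| := abs_sub _ _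
    have h3 := hM' x0
    have h4 := humem ufix x0
    simp only [] at h3
    linarith
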